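/- For T > 0 and all x ≠ 0, the function g_1(x) = (1/(π√T)) ∫_1^∞ e^{−|x|s/√T}/√(s²−1) ds satisfies g_1(x) ≤ e^{−|x|/√T}/√(2π√T |x|). -/

import Mathlib

open Real MeasureTheory

/-- for T > 0 and x ≠ 0,
(1/(π√T)) ∫₁^∞ e^{−|x|s/√T}/√(s²−1) ds ≤ e^{−|x|/√T}/√(2π√T|x|). -/
theorem stmt12 (T x : ℝ) (hT : 0 < T) (hx : x ≠ 0) :
    (1 / (π * Real.sqrt T)) *
        ∫ s in Set.Ioi (1 : ℝ),
          Real.exp (-(|x| * s) / Real.sqrt T) / Real.sqrt (s ^ 2 - 1) ≤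
      Real.exp (-|x| / Real.sqrt T) / Real.sqrt (2 * π * Real.sqrt T * |x|) := by
  have ht : 0 < Real.sqrt T := Real.sqrt_pos.mpr hT
  have hr : 0 < |x| := abs_pos.mpr hx
  set l : ℝ := |x| / Real.sqrt T with hl
  have hlpos : 0 < l := div_pos hr ht
  -- integrability of the majorant on Ioi 0
  have I0 : IntegrableOn (fun u : ℝ => u ^ (-(1/2) : ℝ) * Real.exp (-(l * u)))
      (Set.Ioi (0:ℝ)) := by
    have := integrableOn_rpow_mul_exp_neg_mul_rpow (p := 1) (s := -(1/2)) (b := l)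
      (by norm_num) (by norm_num) hlpos
    refine this.congr_fun (fun u hu => ?_) measurableSet_Ioi
    beta_reduce
    rw [Real.rpow_one, neg_mul]
  -- the majorant on Ioi 1
  have hmp : MeasurePreserving (fun u : ℝ => u + 1) volume volume :=
    measurePreserving_add_right volume 1
  have hemb : MeasurableEmbedding (fun u : ℝ => u + 1) := measurableEmbedding_addRight 1
  have hpre : (fun u : ℝ => u + 1) ⁻¹' Set.Ioi (1:ℝ) = Set.Ioi 0 := by
    ext u; simp
  have I1 : IntegrableOn (fun s : ℝ => Real.exp (-(l * s)) / Real.sqrt (2 * (s - 1)))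
      (Set.Ioi (1:ℝ)) := by
    rw [← hmp.integrableOn_comp_preimage hemb, hpre]
    have : IntegrableOn (fun u : ℝ =>
        (Real.exp (-l) / Real.sqrt 2) * (u ^ (-(1/2) : ℝ) * Real.exp (-(l * u))))
        (Set.Ioi (0:ℝ)) := I0.const_mul _
    refine this.congr_fun (fun u hu => ?_) measurableSet_Ioi
    have hu0 : (0:ℝ) < u := hu
    simp only [Function.comp]
    rw [add_sub_cancel_right, Real.sqrt_mul (by norm_num : (0:ℝ) ≤ 2),
      Real.rpow_neg hu0.le, ← Real.sqrt_eq_rpow,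
      show -(l * (u + 1)) = -l + -(l * u) by ring, Real.exp_add]
    field_simp
  -- step 1 : pointwise bound
  have step1 : (∫ s in Set.Ioi (1:ℝ),
      Real.exp (-(|x| * s) / Real.sqrt T) / Real.sqrt (s ^ 2 - 1)) ≤
      ∫ s in Set.Ioi (1:ℝ), Real.exp (-(l * s)) / Real.sqrt (2 * (s - 1)) := by
    refine integral_mono_of_nonneg ?_ I1 ?_
    · filter_upwards with s; positivity
    · filter_upwards [ae_restrict_mem measurableSet_Ioi] with s hs
      have hs1 : (1:ℝ) < s := hs
      have h1 : -(|x| * s) / Real.sqrt T = -(l * s) := by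
        rw [hl]; field_simp
      rw [h1]
      exact div_le_div_of_nonneg_left (Real.exp_pos _).le
        (Real.sqrt_pos.mpr (by nlinarith)) (Real.sqrt_le_sqrt (by nlinarith))
  -- step 2 : translate and evaluate
  have step2 : (∫ s in Set.Ioi (1:ℝ), Real.exp (-(l * s)) / Real.sqrt (2 * (s - 1)))
      = (Real.exp (-l) / Real.sqrt 2) * ((1 / l) ^ ((1:ℝ)/2) * Real.Gamma (1/2)) := by
    have e1 : (∫ s in Set.Ioi (1:ℝ), Real.exp (-(l * s)) / Real.sqrt (2 * (s - 1)))
        = ∫ u in Set.Ioi (0:ℝ),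
            Real.exp (-(l * (u + 1))) / Real.sqrt (2 * ((u + 1) - 1)) := by
      rw [← hpre, hmp.setIntegral_preimage_emb hemb
        (fun s => Real.exp (-(l * s)) / Real.sqrt (2 * (s - 1))) _]
    rw [e1]
    have e2 : (∫ u in Set.Ioi (0:ℝ),
        Real.exp (-(l * (u + 1))) / Real.sqrt (2 * ((u + 1) - 1)))
        = (Real.exp (-l) / Real.sqrt 2) *
          ∫ u in Set.Ioi (0:ℝ), u ^ ((1:ℝ)/2 - 1) * Real.exp (-(l * u)) := by
      rw [← integral_const_mul]
      refine setIntegral_congr_fun measurableSet_Ioi (fun u hu => ?_)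
      have hu0 : (0:ℝ) < u := hu
      rw [add_sub_cancel_right, Real.sqrt_mul (by norm_num : (0:ℝ) ≤ 2),
        show ((1:ℝ)/2 - 1) = -(1/2) by norm_num,
        Real.rpow_neg hu0.le, ← Real.sqrt_eq_rpow,
        show -(l * (u + 1)) = -l + -(l * u) by ring, Real.exp_add]
      field_simp
    rw [e2, integral_rpow_mul_exp_neg_mul_Ioi (by norm_num) hlpos]
  -- final arithmetic
  have hexp : Real.exp (-|x| / Real.sqrt T) = Real.exp (-l) := by
    rw [hl, neg_div]
  rw [hexp]
  calc (1 / (π * Real.sqrt T)) *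
        ∫ s in Set.Ioi (1 : ℝ),
          Real.exp (-(|x| * s) / Real.sqrt T) / Real.sqrt (s ^ 2 - 1)
      ≤ (1 / (π * Real.sqrt T)) *
        ((Real.exp (-l) / Real.sqrt 2) * ((1 / l) ^ ((1:ℝ)/2) * Real.Gamma (1/2))) := by
        rw [← step2]
        exact mul_le_mul_of_nonneg_left step1 (by positivity)
    _ = Real.exp (-l) / Real.sqrt (2 * π * Real.sqrt T * |x|) := by
        rw [Real.Gamma_one_half_eq, ← Real.sqrt_eq_rpow,
          show (1 / l) = Real.sqrt T / |x| by rw [hl]; field_simp,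
          Real.sqrt_div ht.le |x|,
          Real.sqrt_mul (by positivity : (0:ℝ) ≤ 2 * π * Real.sqrt T) |x|,
          Real.sqrt_mul (by positivity : (0:ℝ) ≤ 2 * π) (Real.sqrt T),
          Real.sqrt_mul (by norm_num : (0:ℝ) ≤ 2) π]
        have hπ : Real.sqrt π * Real.sqrt π = π := Real.mul_self_sqrt pi_pos.le
        have hTT : Real.sqrt (Real.sqrt T) * Real.sqrt (Real.sqrt T) = Real.sqrt T :=
          Real.mul_self_sqrt ht.le
        have h2 : (0:ℝ) < Real.sqrt 2 := by positivity
        have h3 : (0:ℝ) < Real.sqrt π := by positivity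
        have h4 : (0:ℝ) < Real.sqrt (Real.sqrt T) := by positivity
        have h5 : (0:ℝ) < Real.sqrt |x| := by positivity
        field_simp
        linear_combination ((Real.sqrt (Real.sqrt T) * Real.sqrt (Real.sqrt T))) * hπ +
          (π) * hTT
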